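/- Preservation of non-decreasing densities under order conditioning: let X_1,...,X_n, Y_1,...,Y_n be independent real random variables with X_i ~ μ_i and Y_i ~ ν_i, where each ν_i is absolutely continuous with respect to μ_i with a non-decreasing density ρ_i = dν_i/dμ_i, and assume P(X_n ≤ ... ≤ X_1) > 0 and P(Y_n ≤ ... ≤ Y_1) > 0. Define μ̃ as the law of X_1 conditioned on X_n ≤ ... ≤ X_1 and ν̃ as the law of Y_1 conditioned on Y_n ≤ ... ≤ Y_1. Then ν̃ is absolutely continuous with respect to μ̃ with a non-decreasing density dν̃/dμ̃. Consequently (via domination from a non-decreasing density), for every t ∈ ℝ, P(Y_1 ≤ t | Y_n ≤ ... ≤ Y_1) ≤ P(X_1 ≤ t | X_n ≤ ... ≤ X_1). -/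

import Mathlib

open MeasureTheory ProbabilityTheory Filter Set
open scoped ENNReal Topology ProbabilityTheory


noncomputable def chainG : (k : ℕ) → (Fin k → Measure ℝ) → ℝ → ℝ≥0∞
  | 0, _, _ => 1
  | (k+1), m, t => ∫⁻ x in Iic t, chainG k (fun j => m j.succ) x ∂(m 0)

theorem chainG_mono (k : ℕ) (m : Fin k → Measure ℝ) : Monotone (chainG k m) := by
  cases k with
  | zero => exact monotone_const
  | succ k => exact fun s t hst => lintegral_mono_set (Iic_subset_Iic.2 hst)

theorem chainG_measurable (k : ℕ) (m : Fin k → Measure ℝ) : Measurable (chainG k m) :=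
  (chainG_mono k m).measurable

theorem chainG_le_one (k : ℕ) (m : Fin k → Measure ℝ) [h : ∀ i, IsProbabilityMeasure (m i)]
    (t : ℝ) : chainG k m t ≤ 1 := by
  induction k generalizing t with
  | zero => exact le_refl 1
  | succ k ih =>
    haveI : ∀ j : Fin k, IsProbabilityMeasure ((fun j : Fin k => m j.succ) j) :=
      fun j => h j.succ
    calc chainG (k+1) m t ≤ ∫⁻ _ in Iic t, 1 ∂(m 0) :=
          setLIntegral_mono measurable_const fun x _ => ih _ x
      _ ≤ (m 0) (Iic t) := by simp
      _ ≤ 1 := prob_le_one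

theorem chainG_eq_zero (k : ℕ) (μ : Fin k → Measure ℝ) (ρ : Fin k → ℝ → ℝ)
    (hρmeas : ∀ i, Measurable (ρ i)) {s : ℝ}
    (h : chainG k μ s = 0) :
    chainG k (fun i => (μ i).withDensity fun x => ENNReal.ofReal (ρ i x)) s = 0 := by
  induction k generalizing s with
  | zero => simp [chainG] at h
  | succ k ih =>
    rw [chainG] at h ⊢
    rw [lintegral_eq_zero_iff (chainG_measurable _ _)] at h
    rw [restrict_withDensity measurableSet_Iic,
      lintegral_withDensity_eq_lintegral_mul _ ((hρmeas 0).ennreal_ofReal)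
        (chainG_measurable _ _)]
    simp only [Pi.mul_apply]
    rw [lintegral_eq_zero_iff (f := fun a => ENNReal.ofReal (ρ 0 a) * chainG k (fun j => (μ j.succ).withDensity fun x => ENNReal.ofReal (ρ j.succ x)) a) (((hρmeas 0).ennreal_ofReal).mul (chainG_measurable _ _))]
    filter_upwards [h] with x hx
    simp only [Pi.zero_apply] at hx ⊢
    rw [ih _ _ (fun j => hρmeas j.succ) hx, mul_zero]


theorem ratio_mono_aux (lam : Measure ℝ) (φ : ℝ → ℝ≥0∞) (hφ : Monotone φ)
    {s t : ℝ} (hst : s ≤ t) :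
    (∫⁻ x in Iic s, φ x ∂lam) * lam (Iic t) ≤ (∫⁻ x in Iic t, φ x ∂lam) * lam (Iic s) := by
  have hsplit : Iic t = Iic s ∪ Ioc s t := (Iic_union_Ioc_eq_Iic hst).symm
  have hdisj : Disjoint (Iic s) (Ioc s t) := Iic_disjoint_Ioc le_rfl
  have hmeas : lam (Iic t) = lam (Iic s) + lam (Ioc s t) := by
    rw [hsplit, measure_union hdisj measurableSet_Ioc]
  have hint : (∫⁻ x in Iic t, φ x ∂lam) =
      (∫⁻ x in Iic s, φ x ∂lam) + ∫⁻ x in Ioc s t, φ x ∂lam := by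
    rw [hsplit, lintegral_union measurableSet_Ioc hdisj]
  rw [hmeas, hint, mul_add, add_mul]
  refine add_le_add_right ?_ _
  have h1 : (∫⁻ x in Iic s, φ x ∂lam) ≤ φ s * lam (Iic s) := by
    calc (∫⁻ x in Iic s, φ x ∂lam) ≤ ∫⁻ _ in Iic s, φ s ∂lam :=
          setLIntegral_mono measurable_const fun x hx => hφ hx
      _ = φ s * lam (Iic s) := by rw [setLIntegral_const]
  have h2 : φ s * lam (Ioc s t) ≤ ∫⁻ x in Ioc s t, φ x ∂lam := by
    rw [← setLIntegral_const]
    exact setLIntegral_mono (hφ.measurable) fun x hx => hφ hx.1.le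
  calc (∫⁻ x in Iic s, φ x ∂lam) * lam (Ioc s t) ≤ (φ s * lam (Iic s)) * lam (Ioc s t) :=
        mul_le_mul_left h1 _
    _ = (φ s * lam (Ioc s t)) * lam (Iic s) := by ring
    _ ≤ (∫⁻ x in Ioc s t, φ x ∂lam) * lam (Iic s) := mul_le_mul_left h2 _



theorem chainG_cross (k : ℕ) (μ : Fin k → Measure ℝ) (ρ : Fin k → ℝ → ℝ)
    (hμprob : ∀ i, IsProbabilityMeasure (μ i))
    (hνprob : ∀ i, IsProbabilityMeasure ((μ i).withDensity fun x => ENNReal.ofReal (ρ i x)))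
    (hρmono : ∀ i, Monotone (ρ i)) (hρmeas : ∀ i, Measurable (ρ i))
    {s t : ℝ} (hst : s ≤ t) :
    chainG k (fun i => (μ i).withDensity fun x => ENNReal.ofReal (ρ i x)) s * chainG k μ t ≤
      chainG k (fun i => (μ i).withDensity fun x => ENNReal.ofReal (ρ i x)) t * chainG k μ s := by
  induction k generalizing s t with
  | zero => simp [chainG]
  | succ k ih =>
    set Gμ : ℝ → ℝ≥0∞ := chainG k (fun j => μ j.succ) with hGμ
    set Gν : ℝ → ℝ≥0∞ :=
      chainG k (fun j => (μ j.succ).withDensity fun x => ENNReal.ofReal (ρ j.succ x)) with hGν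
    haveI : ∀ i, IsProbabilityMeasure ((fun j : Fin k => μ j.succ) i) := fun i => hμprob i.succ
    have hGμ_le_one : ∀ x, Gμ x ≤ 1 := fun x => chainG_le_one k _ x
    haveI : ∀ i : Fin k, IsProbabilityMeasure
        ((fun j : Fin k => (μ j.succ).withDensity fun x => ENNReal.ofReal (ρ j.succ x)) i) :=
      fun i => hνprob i.succ
    have hGν_le_one : ∀ x, Gν x ≤ 1 := fun x => chainG_le_one k _ x
    have hzero : ∀ x, Gμ x = 0 → Gν x = 0 := fun x hx =>
      chainG_eq_zero k _ (fun j => ρ j.succ) (fun j => hρmeas j.succ) hx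
    have hcross : ∀ ⦃x y : ℝ⦄, x ≤ y → Gν x * Gμ y ≤ Gν y * Gμ x := fun x y hxy =>
      ih (fun j => μ j.succ) (fun j => ρ j.succ) (fun i => hμprob i.succ)
        (fun i => hνprob i.succ) (fun i => hρmono i.succ) (fun i => hρmeas i.succ) hxy
    set f0 : ℝ → ℝ≥0∞ := fun x => ENNReal.ofReal (ρ 0 x) with hf0
    set φ : ℝ → ℝ≥0∞ := fun x => f0 x * (Gν x / Gμ x) with hφdef
    have hratio_mono : Monotone fun x => Gν x / Gμ x := by
      intro x y hxy
      show Gν x / Gμ x ≤ Gν y / Gμ y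
      by_cases hx : Gμ x = 0
      · rw [hzero x hx, ENNReal.zero_div]
        exact zero_le
      · have hxt : Gμ x ≠ ∞ := (lt_of_le_of_lt (hGμ_le_one x) (by norm_num)).ne
        have hy : Gμ y ≠ 0 := fun hy => hx (le_antisymm (hy ▸ chainG_mono k _ hxy) zero_le)
        have hyt : Gμ y ≠ ∞ := (lt_of_le_of_lt (hGμ_le_one y) (by norm_num)).ne
        rw [ENNReal.div_le_iff hx hxt]
        have : Gν y / Gμ y * Gμ x = Gν y * Gμ x / Gμ y := by
          rw [div_eq_mul_inv, mul_right_comm, ← div_eq_mul_inv]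
        rw [this, ENNReal.le_div_iff_mul_le (Or.inl hy) (Or.inl hyt)]
        exact hcross hxy
    have hφmono : Monotone φ := fun x y hxy =>
      mul_le_mul' (ENNReal.ofReal_le_ofReal (hρmono 0 hxy)) (hratio_mono hxy)
    set lam : Measure ℝ := (μ 0).withDensity Gμ with hlam
    have hμ_eval : ∀ u : ℝ, chainG (k+1) μ u = lam (Iic u) := by
      intro u
      rw [hlam, withDensity_apply _ measurableSet_Iic]
      rfl
    have hc1 : ∀ x, Gμ x * φ x = f0 x * Gν x := by
      intro x
      by_cases hx : Gμ x = 0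
      · rw [hx, hzero x hx, zero_mul, mul_zero]
      · have hxt : Gμ x ≠ ∞ := (lt_of_le_of_lt (hGμ_le_one x) (by norm_num)).ne
        rw [hφdef]
        simp only [mul_comm (Gμ x), mul_assoc]
        rw [ENNReal.div_mul_cancel hx hxt]
    have hν_eval : ∀ u : ℝ, chainG (k+1)
        (fun i => (μ i).withDensity fun x => ENNReal.ofReal (ρ i x)) u =
        ∫⁻ x in Iic u, φ x ∂lam := by
      intro u
      show (∫⁻ x in Iic u, chainG k
          (fun j => (μ j.succ).withDensity fun x => ENNReal.ofReal (ρ j.succ x)) x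
          ∂((μ 0).withDensity fun x => ENNReal.ofReal (ρ 0 x))) = _
      rw [hlam, restrict_withDensity measurableSet_Iic,
        restrict_withDensity measurableSet_Iic,
        lintegral_withDensity_eq_lintegral_mul _ ((hρmeas 0).ennreal_ofReal)
          (chainG_measurable _ _),
        lintegral_withDensity_eq_lintegral_mul _ (chainG_measurable k _) hφmono.measurable]
      simp only [Pi.mul_apply]
      exact lintegral_congr fun x => (hc1 x).symm
    rw [hν_eval s, hν_eval t, hμ_eval s, hμ_eval t]
    exact ratio_mono_aux lam φ hφmono hst


theorem chainSet_measurable (k : ℕ) :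
    MeasurableSet {z : Fin k → ℝ | ∀ i j : Fin k, i ≤ j → z j ≤ z i} := by
  have : {z : Fin k → ℝ | ∀ i j : Fin k, i ≤ j → z j ≤ z i} =
      ⋂ i, ⋂ j, {z : Fin k → ℝ | i ≤ j → z j ≤ z i} := by ext z; simp
  rw [this]
  refine MeasurableSet.iInter fun i => MeasurableSet.iInter fun j => ?_
  by_cases hij : i ≤ j
  · simp only [hij, forall_true_left]
    exact measurableSet_le (measurable_pi_apply j) (measurable_pi_apply i)
  · simp only [hij, false_implies]
    exact MeasurableSet.univ

theorem chainSetLe_measurable (k : ℕ) (t : ℝ) :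
    MeasurableSet {z : Fin k → ℝ | (∀ i j : Fin k, i ≤ j → z j ≤ z i) ∧ ∀ i, z i ≤ t} := by
  refine (chainSet_measurable k).inter ?_
  show MeasurableSet {z : Fin k → ℝ | ∀ i, z i ≤ t}
  have : {z : Fin k → ℝ | ∀ i, z i ≤ t} = ⋂ i, {z : Fin k → ℝ | z i ≤ t} := by ext z; simp
  rw [this]
  exact MeasurableSet.iInter fun i => measurableSet_le (measurable_pi_apply i) measurable_const

theorem pi_chain_eq (k : ℕ) (m : Fin k → Measure ℝ) [hP : ∀ i, IsProbabilityMeasure (m i)]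
    (t : ℝ) :
    Measure.pi m {z | (∀ i j : Fin k, i ≤ j → z j ≤ z i) ∧ ∀ i, z i ≤ t} = chainG k m t := by
  induction k generalizing t with
  | zero =>
    have : {z : Fin 0 → ℝ | (∀ i j : Fin 0, i ≤ j → z j ≤ z i) ∧ ∀ i, z i ≤ t} = univ :=
      eq_univ_of_forall fun z => ⟨fun i => i.elim0, fun i => i.elim0⟩
    rw [this, chainG]
    exact measure_univ
  | succ k ih =>
    haveI : ∀ j : Fin k, IsProbabilityMeasure ((fun j : Fin k => m j.succ) j) :=
      fun j => hP j.succ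
    set T : Set (ℝ × (Fin k → ℝ)) :=
      {p | p.1 ≤ t ∧ (∀ i j : Fin k, i ≤ j → p.2 j ≤ p.2 i) ∧ ∀ i, p.2 i ≤ p.1} with hT
    have hTmeas : MeasurableSet T := by
      refine MeasurableSet.inter (measurable_fst measurableSet_Iic) (MeasurableSet.inter ?_ ?_)
      · have : {p : ℝ × (Fin k → ℝ) | ∀ i j : Fin k, i ≤ j → p.2 j ≤ p.2 i} =
            ⋂ i, ⋂ j, {p : ℝ × (Fin k → ℝ) | i ≤ j → p.2 j ≤ p.2 i} := by ext p; simp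
        show MeasurableSet {p : ℝ × (Fin k → ℝ) | ∀ i j : Fin k, i ≤ j → p.2 j ≤ p.2 i}
        rw [this]
        refine MeasurableSet.iInter fun i => MeasurableSet.iInter fun j => ?_
        by_cases hij : i ≤ j
        · simp only [hij, forall_true_left]
          exact measurableSet_le measurable_snd.eval measurable_snd.eval
        · simp only [hij, false_implies]
          exact MeasurableSet.univ
      · have : {p : ℝ × (Fin k → ℝ) | ∀ i : Fin k, p.2 i ≤ p.1} =
            ⋂ i, {p : ℝ × (Fin k → ℝ) | p.2 i ≤ p.1} := by ext p; simp
        show MeasurableSet {p : ℝ × (Fin k → ℝ) | ∀ i : Fin k, p.2 i ≤ p.1}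
        rw [this]
        exact MeasurableSet.iInter fun i =>
          measurableSet_le measurable_snd.eval measurable_fst
    have hmp := measurePreserving_piFinSuccAbove m 0
    have hfam : (fun j : Fin k => m ((0 : Fin (k+1)).succAbove j)) = fun j : Fin k => m j.succ := by
      funext j; rw [Fin.zero_succAbove]
    rw [hfam] at hmp
    have hSeq : {z : Fin (k+1) → ℝ | (∀ i j : Fin (k+1), i ≤ j → z j ≤ z i) ∧ ∀ i, z i ≤ t} =
        (MeasurableEquiv.piFinSuccAbove (fun _ => ℝ) 0) ⁻¹' T := by
      ext z
      simp only [mem_setOf_eq, mem_preimage, MeasurableEquiv.piFinSuccAbove_apply, hT,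
        Fin.removeNth, Fin.zero_succAbove]
      constructor
      · rintro ⟨hchain, hle⟩
        exact ⟨hle 0, fun i j hij => hchain i.succ j.succ (Fin.succ_le_succ_iff.2 hij),
          fun i => hchain 0 i.succ (Fin.zero_le _)⟩
      · rintro ⟨h0, hchain, hle⟩
        constructor
        · intro i j hij
          induction i using Fin.cases with
          | zero =>
            induction j using Fin.cases with
            | zero => exact le_refl _
            | succ j => exact hle j
          | succ i =>
            induction j using Fin.cases with
            | zero => exact absurd hij (by simp [Fin.le_def, Fin.succ])
            | succ j => exact hchain i j (Fin.succ_le_succ_iff.1 hij)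
        · intro i
          induction i using Fin.cases with
          | zero => exact h0
          | succ i => exact (hle i).trans h0
    rw [hSeq, hmp.measure_preimage hTmeas.nullMeasurableSet]
    rw [Measure.prod_apply hTmeas]
    have hsec : ∀ x : ℝ, (Measure.pi fun j : Fin k => m j.succ) (Prod.mk x ⁻¹' T) =
        (Iic t).indicator (fun x => (Measure.pi fun j : Fin k => m j.succ)
          {w | (∀ i j : Fin k, i ≤ j → w j ≤ w i) ∧ ∀ i, w i ≤ x}) x := by
      intro x
      by_cases hx : x ≤ t
      · rw [indicator_of_mem (show x ∈ Iic t from hx)]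
        congr 1
        ext w
        simp [hT, hx]
      · rw [indicator_of_notMem (show x ∉ Iic t from hx)]
        have : Prod.mk x ⁻¹' T = ∅ := by
          ext w; simp [hT, hx]
        rw [this, measure_empty]
    rw [lintegral_congr hsec, lintegral_indicator measurableSet_Iic, chainG]
    exact setLIntegral_congr_fun measurableSet_Iic (fun x _ => ih _ x)



theorem chainG_ratio_mono (k : ℕ) (μ : Fin k → Measure ℝ) (ρ : Fin k → ℝ → ℝ)
    (hμprob : ∀ i, IsProbabilityMeasure (μ i))
    (hνprob : ∀ i, IsProbabilityMeasure ((μ i).withDensity fun x => ENNReal.ofReal (ρ i x)))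
    (hρmono : ∀ i, Monotone (ρ i)) (hρmeas : ∀ i, Measurable (ρ i)) :
    Monotone fun x =>
      chainG k (fun i => (μ i).withDensity fun x => ENNReal.ofReal (ρ i x)) x / chainG k μ x := by
  set Gμ : ℝ → ℝ≥0∞ := chainG k μ with hGμ
  set Gν : ℝ → ℝ≥0∞ := chainG k (fun i => (μ i).withDensity fun x => ENNReal.ofReal (ρ i x))
    with hGν
  haveI := hμprob
  have hGμ_le_one : ∀ x, Gμ x ≤ 1 := fun x => chainG_le_one k μ x
  have hzero : ∀ x, Gμ x = 0 → Gν x = 0 := fun x hx => chainG_eq_zero k μ ρ hρmeas hx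
  intro x y hxy
  show Gν x / Gμ x ≤ Gν y / Gμ y
  by_cases hx : Gμ x = 0
  · rw [hzero x hx, ENNReal.zero_div]
    exact zero_le
  · have hxt : Gμ x ≠ ∞ := (lt_of_le_of_lt (hGμ_le_one x) (by norm_num)).ne
    have hy : Gμ y ≠ 0 := fun hy => hx (le_antisymm (hy ▸ chainG_mono k μ hxy) zero_le)
    have hyt : Gμ y ≠ ∞ := (lt_of_le_of_lt (hGμ_le_one y) (by norm_num)).ne
    rw [ENNReal.div_le_iff hx hxt]
    have : Gν y / Gμ y * Gμ x = Gν y * Gμ x / Gμ y := by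
      rw [div_eq_mul_inv, mul_right_comm, ← div_eq_mul_inv]
    rw [this, ENNReal.le_div_iff_mul_le (Or.inl hy) (Or.inl hyt)]
    exact chainG_cross k μ ρ hμprob hνprob hρmono hρmeas hxy

theorem pi_chain_inter (k : ℕ) (m : Fin (k+1) → Measure ℝ)
    [hP : ∀ i, IsProbabilityMeasure (m i)] (B : Set ℝ) (hB : MeasurableSet B) :
    Measure.pi m ({y : Fin (k+1) → ℝ | ∀ i j : Fin (k+1), i ≤ j → y j ≤ y i} ∩
        ((fun y => y 0) ⁻¹' B)) =
      ∫⁻ x in B, chainG k (fun j => m j.succ) x ∂(m 0) := by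
  haveI : ∀ j : Fin k, IsProbabilityMeasure ((fun j : Fin k => m j.succ) j) :=
    fun j => hP j.succ
  set T : Set (ℝ × (Fin k → ℝ)) :=
    {p | p.1 ∈ B ∧ (∀ i j : Fin k, i ≤ j → p.2 j ≤ p.2 i) ∧ ∀ i, p.2 i ≤ p.1} with hT
  have hTmeas : MeasurableSet T := by
    refine MeasurableSet.inter (measurable_fst hB) (MeasurableSet.inter ?_ ?_)
    · have : {p : ℝ × (Fin k → ℝ) | ∀ i j : Fin k, i ≤ j → p.2 j ≤ p.2 i} =
          ⋂ i, ⋂ j, {p : ℝ × (Fin k → ℝ) | i ≤ j → p.2 j ≤ p.2 i} := by ext p; simp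
      show MeasurableSet {p : ℝ × (Fin k → ℝ) | ∀ i j : Fin k, i ≤ j → p.2 j ≤ p.2 i}
      rw [this]
      refine MeasurableSet.iInter fun i => MeasurableSet.iInter fun j => ?_
      by_cases hij : i ≤ j
      · simp only [hij, forall_true_left]
        exact measurableSet_le measurable_snd.eval measurable_snd.eval
      · simp only [hij, false_implies]
        exact MeasurableSet.univ
    · have : {p : ℝ × (Fin k → ℝ) | ∀ i : Fin k, p.2 i ≤ p.1} =
          ⋂ i, {p : ℝ × (Fin k → ℝ) | p.2 i ≤ p.1} := by ext p; simp
      show MeasurableSet {p : ℝ × (Fin k → ℝ) | ∀ i : Fin k, p.2 i ≤ p.1}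
      rw [this]
      exact MeasurableSet.iInter fun i => measurableSet_le measurable_snd.eval measurable_fst
  have hmp := measurePreserving_piFinSuccAbove m 0
  have hfam : (fun j : Fin k => m ((0 : Fin (k+1)).succAbove j)) = fun j : Fin k => m j.succ := by
    funext j; rw [Fin.zero_succAbove]
  rw [hfam] at hmp
  have hSeq : {y : Fin (k+1) → ℝ | ∀ i j : Fin (k+1), i ≤ j → y j ≤ y i} ∩
      ((fun y => y 0) ⁻¹' B) =
      (MeasurableEquiv.piFinSuccAbove (fun _ => ℝ) 0) ⁻¹' T := by
    ext z
    simp only [mem_inter_iff, mem_setOf_eq, mem_preimage, MeasurableEquiv.piFinSuccAbove_apply,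
      hT, Fin.removeNth, Fin.zero_succAbove]
    constructor
    · rintro ⟨hchain, hB0⟩
      exact ⟨hB0, fun i j hij => hchain i.succ j.succ (Fin.succ_le_succ_iff.2 hij),
        fun i => hchain 0 i.succ (Fin.zero_le _)⟩
    · rintro ⟨hB0, hchain, hle⟩
      refine ⟨fun i j hij => ?_, hB0⟩
      induction i using Fin.cases with
      | zero =>
        induction j using Fin.cases with
        | zero => exact le_refl _
        | succ j => exact hle j
      | succ i =>
        induction j using Fin.cases with
        | zero => exact absurd hij (by simp [Fin.le_def, Fin.succ])
        | succ j => exact hchain i j (Fin.succ_le_succ_iff.1 hij)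
  rw [hSeq, hmp.measure_preimage hTmeas.nullMeasurableSet, Measure.prod_apply hTmeas]
  have hsec : ∀ x : ℝ, (Measure.pi fun j : Fin k => m j.succ) (Prod.mk x ⁻¹' T) =
      B.indicator (fun x => (Measure.pi fun j : Fin k => m j.succ)
        {w | (∀ i j : Fin k, i ≤ j → w j ≤ w i) ∧ ∀ i, w i ≤ x}) x := by
    intro x
    by_cases hx : x ∈ B
    · rw [indicator_of_mem hx]
      congr 1
      ext w
      simp [hT, hx]
    · rw [indicator_of_notMem hx]
      have : Prod.mk x ⁻¹' T = ∅ := by ext w; simp [hT, hx]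
      rw [this, measure_empty]
  rw [lintegral_congr hsec, lintegral_indicator hB]
  exact setLIntegral_congr_fun hB (fun x _ => pi_chain_eq k _ x)

theorem map_cond_eq (k : ℕ) (m : Fin (k+1) → Measure ℝ)
    [hP : ∀ i, IsProbabilityMeasure (m i)] :
    Measure.map (fun y => y 0)
        ((Measure.pi m)[|{y : Fin (k+1) → ℝ | ∀ i j : Fin (k+1), i ≤ j → y j ≤ y i}]) =
      (Measure.pi m {y : Fin (k+1) → ℝ | ∀ i j : Fin (k+1), i ≤ j → y j ≤ y i})⁻¹ •
        (m 0).withDensity (chainG k (fun j => m j.succ)) := by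
  ext B hB
  rw [Measure.map_apply (measurable_pi_apply 0) hB,
    cond_apply (chainSet_measurable (k+1)), Measure.smul_apply, smul_eq_mul,
    withDensity_apply _ hB, pi_chain_inter k m B hB]

theorem dominated_of_monotone_density (P Q : Measure ℝ) [IsProbabilityMeasure P]
    [IsProbabilityMeasure Q] (g : ℝ → ℝ≥0∞) (hg : Monotone g)
    (hQP : Q = P.withDensity g) (t : ℝ) : Q (Iic t) ≤ P (Iic t) := by
  have hQIic : Q (Iic t) ≤ g t * P (Iic t) := by
    rw [hQP, withDensity_apply _ measurableSet_Iic]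
    calc (∫⁻ x in Iic t, g x ∂P) ≤ ∫⁻ _ in Iic t, g t ∂P :=
          setLIntegral_mono measurable_const fun x hx => hg hx
      _ = g t * P (Iic t) := by rw [setLIntegral_const]
  have hQIoi : g t * P (Ioi t) ≤ Q (Ioi t) := by
    rw [hQP, withDensity_apply _ measurableSet_Ioi, ← setLIntegral_const]
    exact setLIntegral_mono hg.measurable fun x hx => hg (le_of_lt hx)
  by_cases hc : g t ≤ 1
  · calc Q (Iic t) ≤ g t * P (Iic t) := hQIic
      _ ≤ 1 * P (Iic t) := mul_le_mul_left hc _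
      _ = P (Iic t) := one_mul _
  · push_neg at hc
    have h1 : P (Ioi t) ≤ Q (Ioi t) :=
      le_trans (by simpa using mul_le_mul_left hc.le (P (Ioi t))) hQIoi
    have hPsum : P (Iic t) + P (Ioi t) = 1 := by
      rw [← measure_union (Iic_disjoint_Ioi le_rfl) measurableSet_Ioi, Iic_union_Ioi]
      exact measure_univ
    have hQsum : Q (Iic t) + Q (Ioi t) = 1 := by
      rw [← measure_union (Iic_disjoint_Ioi le_rfl) measurableSet_Ioi, Iic_union_Ioi]
      exact measure_univ
    have hkey : Q (Iic t) + P (Ioi t) ≤ P (Iic t) + P (Ioi t) := by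
      rw [hPsum, ← hQsum]
      exact add_le_add_right h1 _
    exact (ENNReal.add_le_add_iff_right (measure_ne_top P (Ioi t))).1 hkey
/-- **Preservation of non-decreasing densities under order conditioning.**
Let `X_1, …, X_n` be independent with `X_i ∼ μ_i` and `Y_1, …, Y_n` independent with
`Y_i ∼ ν_i = ρ_i · μ_i` for non-decreasing densities `ρ_i`, and suppose the ordering
events `X_n ≤ ⋯ ≤ X_1` and `Y_n ≤ ⋯ ≤ Y_1` have positive probability (joint laws are
the product measures; coordinate `i` represents the `(i+1)`-th variable).  Let `μ̃` be
the law of `X_1` conditioned on `X_n ≤ ⋯ ≤ X_1` and `ν̃` the law of `Y_1` conditioned on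
`Y_n ≤ ⋯ ≤ Y_1`.  Then `ν̃ ≪ μ̃` with a non-decreasing density, and consequently
`P(Y_1 ≤ t | Y_n ≤ ⋯ ≤ Y_1) ≤ P(X_1 ≤ t | X_n ≤ ⋯ ≤ X_1)` for every `t`. -/
theorem nondecreasing_density_preserved_by_order_conditioning
    (n : ℕ) (hn : 0 < n)
    (μ ν : Fin n → Measure ℝ)
    [∀ i, IsProbabilityMeasure (μ i)] [∀ i, IsProbabilityMeasure (ν i)]
    (ρ : Fin n → ℝ → ℝ)
    (hρmono : ∀ i, Monotone (ρ i)) (hρ0 : ∀ i x, 0 ≤ ρ i x)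
    (hρmeas : ∀ i, Measurable (ρ i))
    (hν : ∀ i, ν i = (μ i).withDensity fun x => ENNReal.ofReal (ρ i x))
    (hposμ : 0 < Measure.pi μ {y | ∀ i j : Fin n, i ≤ j → y j ≤ y i})
    (hposν : 0 < Measure.pi ν {y | ∀ i j : Fin n, i ≤ j → y j ≤ y i}) :
    (∃ g : ℝ → ℝ, Monotone g ∧ (∀ x, 0 ≤ g x) ∧ Measurable g ∧
      Measure.map (fun y => y ⟨0, hn⟩)
          ((Measure.pi ν)[|{y | ∀ i j : Fin n, i ≤ j → y j ≤ y i}]) =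
        (Measure.map (fun y => y ⟨0, hn⟩)
          ((Measure.pi μ)[|{y | ∀ i j : Fin n, i ≤ j → y j ≤ y i}])).withDensity
            fun x => ENNReal.ofReal (g x)) ∧
    ∀ t : ℝ,
      Measure.map (fun y => y ⟨0, hn⟩)
          ((Measure.pi ν)[|{y | ∀ i j : Fin n, i ≤ j → y j ≤ y i}]) (Set.Iic t) ≤
        Measure.map (fun y => y ⟨0, hn⟩)
          ((Measure.pi μ)[|{y | ∀ i j : Fin n, i ≤ j → y j ≤ y i}]) (Set.Iic t) := by
  obtain ⟨k, rfl⟩ : ∃ k, n = k + 1 := ⟨n - 1, (Nat.succ_pred_eq_of_pos hn).symm⟩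
  have h0 : (fun y : Fin (k+1) → ℝ => y ⟨0, hn⟩) = fun y : Fin (k+1) → ℝ => y 0 := rfl
  rw [h0]
  set A := {y : Fin (k+1) → ℝ | ∀ i j : Fin (k+1), i ≤ j → y j ≤ y i} with hA
  set Gμ : ℝ → ℝ≥0∞ := chainG k (fun j => μ j.succ) with hGμdef
  set Gν : ℝ → ℝ≥0∞ := chainG k (fun j => ν j.succ) with hGνdef
  have hνfam : (fun j : Fin k => ν j.succ) =
      fun j : Fin k => (μ j.succ).withDensity fun x => ENNReal.ofReal (ρ j.succ x) :=
    funext fun j => hν j.succ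
  have hGν : Gν = chainG k
      (fun j : Fin k => (μ j.succ).withDensity fun x => ENNReal.ofReal (ρ j.succ x)) := by
    rw [hGνdef, hνfam]
  set Zμ := Measure.pi μ A with hZμdef
  set Zν := Measure.pi ν A with hZνdef
  have hZμ0 : Zμ ≠ 0 := hposμ.ne'
  have hZν0 : Zν ≠ 0 := hposν.ne'
  have hZμtop : Zμ ≠ ∞ := measure_ne_top _ _
  have hZνtop : Zν ≠ ∞ := measure_ne_top _ _
  have hmapμ : Measure.map (fun y => y 0) ((Measure.pi μ)[|A]) =
      Zμ⁻¹ • (μ 0).withDensity Gμ := map_cond_eq k μ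
  have hmapν : Measure.map (fun y => y 0) ((Measure.pi ν)[|A]) =
      Zν⁻¹ • (ν 0).withDensity Gν := map_cond_eq k ν
  have hμprob' : ∀ i : Fin k, IsProbabilityMeasure (μ i.succ) := fun i => inferInstance
  have hνprob' : ∀ i : Fin k,
      IsProbabilityMeasure ((μ i.succ).withDensity fun x => ENNReal.ofReal (ρ i.succ x)) :=
    fun i => hν i.succ ▸ (inferInstance : IsProbabilityMeasure (ν i.succ))
  have hzero : ∀ x, Gμ x = 0 → Gν x = 0 := fun x hx => by
    rw [hGν]
    exact chainG_eq_zero k _ (fun j => ρ j.succ) (fun j => hρmeas j.succ) hx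
  have hratio : Monotone fun x => Gν x / Gμ x := by
    rw [hGν]
    exact chainG_ratio_mono k (fun j => μ j.succ) (fun j => ρ j.succ) hμprob' hνprob'
      (fun j => hρmono j.succ) (fun j => hρmeas j.succ)
  haveI := hμprob'
  have hGμ_le_one : ∀ x, Gμ x ≤ 1 := fun x => chainG_le_one k _ x
  haveI : ∀ j : Fin k, IsProbabilityMeasure ((fun j : Fin k => ν j.succ) j) :=
    fun j => inferInstance
  have hGν_le_one : ∀ x, Gν x ≤ 1 := fun x => chainG_le_one k _ x
  set f0 : ℝ → ℝ≥0∞ := fun x => ENNReal.ofReal (ρ 0 x) with hf0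
  set c : ℝ≥0∞ := Zμ * Zν⁻¹ with hc
  have hctop : c ≠ ∞ := ENNReal.mul_ne_top hZμtop (ENNReal.inv_ne_top.2 hZν0)
  set gE : ℝ → ℝ≥0∞ := fun x => c * (f0 x * (Gν x / Gμ x)) with hgE
  have hgEmono : Monotone gE := fun x y hxy =>
    mul_le_mul' le_rfl
      (mul_le_mul' (ENNReal.ofReal_le_ofReal (hρmono 0 hxy)) (hratio hxy))
  have hgEtop : ∀ x, gE x ≠ ∞ := by
    intro x
    refine ENNReal.mul_ne_top hctop (ENNReal.mul_ne_top ENNReal.ofReal_ne_top ?_)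
    by_cases hx : Gμ x = 0
    · rw [hzero x hx, ENNReal.zero_div]
      exact ENNReal.zero_ne_top
    · exact (ENNReal.div_lt_top (lt_of_le_of_lt (hGν_le_one x) (by norm_num)).ne hx).ne
  set g : ℝ → ℝ := fun x => (gE x).toReal with hgdef
  have hgmono : Monotone g := fun x y hxy => ENNReal.toReal_mono (hgEtop y) (hgEmono hxy)
  have hgnn : ∀ x, 0 ≤ g x := fun x => ENNReal.toReal_nonneg
  have hgmeas : Measurable g := hgEmono.measurable.ennreal_toReal
  have hofReal : (fun x => ENNReal.ofReal (g x)) = gE :=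
    funext fun x => ENNReal.ofReal_toReal (hgEtop x)
  have hGμmeas : Measurable Gμ := chainG_measurable k _
  have hGνmeas : Measurable Gν := chainG_measurable k _
  have hkey : ∀ x, Gμ x * gE x = c * (f0 x * Gν x) := by
    intro x
    by_cases hx : Gμ x = 0
    · rw [hx, hzero x hx, zero_mul, mul_zero, mul_zero]
    · have hxt : Gμ x ≠ ∞ := (lt_of_le_of_lt (hGμ_le_one x) (by norm_num)).ne
      rw [hgE]
      simp only [div_eq_mul_inv]
      rw [show Gμ x * (c * (f0 x * (Gν x * (Gμ x)⁻¹))) =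
          (Gμ x * (Gμ x)⁻¹) * (c * (f0 x * Gν x)) by ring,
        ENNReal.mul_inv_cancel hx hxt, one_mul]
  have hdens : Zν⁻¹ • (ν 0).withDensity Gν =
      (Zμ⁻¹ • (μ 0).withDensity Gμ).withDensity gE := by
    rw [withDensity_smul_measure, ← withDensity_mul _ hGμmeas hgEmono.measurable]
    have h1 : (Gμ * gE) = fun x => c * (f0 x * Gν x) := funext fun x => hkey x
    rw [h1]
    have h2 : (fun x => c * (f0 x * Gν x)) = c • fun x => f0 x * Gν x := rfl
    rw [h2, withDensity_smul c (f := fun x => f0 x * Gν x) (((hρmeas 0).ennreal_ofReal).mul hGνmeas), smul_smul,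
      show Zμ⁻¹ * c = Zν⁻¹ by
        rw [hc, ← mul_assoc, ENNReal.inv_mul_cancel hZμ0 hZμtop, one_mul]]
    congr 1
    rw [hν 0, ← withDensity_mul _ ((hρmeas 0).ennreal_ofReal) hGνmeas]
    rfl
  have hdensity : Measure.map (fun y => y 0) ((Measure.pi ν)[|A]) =
      (Measure.map (fun y => y 0) ((Measure.pi μ)[|A])).withDensity
        fun x => ENNReal.ofReal (g x) := by
    rw [hmapν, hmapμ, hofReal]
    exact hdens
  refine ⟨⟨g, hgmono, hgnn, hgmeas, hdensity⟩, fun t => ?_⟩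
  haveI : IsProbabilityMeasure ((Measure.pi μ)[|A]) := cond_isProbabilityMeasure hZμ0
  haveI : IsProbabilityMeasure ((Measure.pi ν)[|A]) := cond_isProbabilityMeasure hZν0
  haveI : IsProbabilityMeasure (Measure.map (fun y : Fin (k+1) → ℝ => y 0)
      ((Measure.pi μ)[|A])) := Measure.isProbabilityMeasure_map (measurable_pi_apply _).aemeasurable
  haveI : IsProbabilityMeasure (Measure.map (fun y : Fin (k+1) → ℝ => y 0)
      ((Measure.pi ν)[|A])) := Measure.isProbabilityMeasure_map (measurable_pi_apply _).aemeasurable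
  refine dominated_of_monotone_density _ _ (fun x => ENNReal.ofReal (g x)) ?_ hdensity t
  rw [hofReal]
  exact hgEmono
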